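/- Let G be a finite group, N a subnormal subgroup of G, and x ∈ N a p-element. Then G = N · Sub_G(x). -/

import Mathlib

open scoped Pointwise

/-- `H` is a normal subgroup of `K` (in particular `H ≤ K`). -/
def normalIn {G : Type*} [Group G] (H K : Subgroup G) : Prop :=
  H ≤ K ∧ ∀ k ∈ K, ∀ h ∈ H, k * h * k⁻¹ ∈ H

/-- `H` is subnormal in `K`: there is a chain `H = H₀ ⊴ H₁ ⊴ ⋯ ⊴ Hₙ = K`. -/
def subnormalIn {G : Type*} [Group G] (H K : Subgroup G) : Prop :=
  ∃ n : ℕ, ∃ f : Fin (n + 1) → Subgroup G,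
    f 0 = H ∧ f (Fin.last n) = K ∧ ∀ i : Fin n, normalIn (f i.castSucc) (f i.succ)

/-- The subnormalizer subset `S_G(x) = {y ∈ G : ⟨x⟩ is subnormal in ⟨x, y⟩}`. -/
def subnSet {G : Type*} [Group G] (x : G) : Set G :=
  {y | subnormalIn (Subgroup.zpowers x) (Subgroup.closure {x, y})}

/-- The subnormalizer `Sub_G(x) = ⟨S_G(x)⟩`. -/
def SubG {G : Type*} [Group G] (x : G) : Subgroup G :=
  Subgroup.closure (subnSet x)

section Aux

variable {G : Type*} [Group G]

theorem subnormalIn_iff_reflTransGen {H K : Subgroup G} :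
    subnormalIn H K ↔ Relation.ReflTransGen normalIn H K := by
  constructor
  · rintro ⟨n, f, h0, hl, hs⟩
    subst h0; subst hl
    induction n with
    | zero => exact .refl
    | succ n ih =>
      have h1 : normalIn (f 0) (f 1) := by
        simpa using hs 0
      refine Relation.ReflTransGen.head h1 ?_
      have := ih (fun i => f i.succ) (fun i => by
        have := hs i.succ
        rwa [← Fin.succ_castSucc] at this)
      simpa [Fin.succ_last] using this
  · intro h
    induction h with
    | refl => exact ⟨0, fun _ => H, rfl, rfl, fun i => i.elim0⟩
    | @tail b c _hab hbc ih =>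
      obtain ⟨n, f, h0, hl, hs⟩ := ih
      refine ⟨n + 1, Fin.snoc f c, ?_, ?_, ?_⟩
      · rw [show (0 : Fin (n + 2)) = Fin.castSucc 0 from rfl, Fin.snoc_castSucc]; exact h0
      · rw [Fin.snoc_last]
      · intro i
        refine Fin.lastCases ?_ ?_ i
        · rw [Fin.snoc_castSucc, Fin.succ_last, Fin.snoc_last, hl]
          exact hbc
        · intro j
          rw [Fin.succ_castSucc, Fin.snoc_castSucc, Fin.snoc_castSucc]
          exact hs j

theorem normalIn_inf {A B : Subgroup G} (L : Subgroup G) (h : normalIn A B) :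
    normalIn (A ⊓ L) (B ⊓ L) := by
  refine ⟨inf_le_inf_right L h.1, ?_⟩
  intro k hk a ha
  rw [Subgroup.mem_inf] at hk ha ⊢
  exact ⟨h.2 k hk.1 a ha.1, mul_mem (mul_mem hk.2 ha.2) (inv_mem hk.2)⟩

theorem subnormalIn_inf {A B : Subgroup G} (L : Subgroup G) (h : subnormalIn A B) :
    subnormalIn (A ⊓ L) (B ⊓ L) := by
  rw [subnormalIn_iff_reflTransGen] at h ⊢
  exact Relation.ReflTransGen.lift (· ⊓ L) (fun a b hab => normalIn_inf L hab) _ _ h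

theorem normalIn_map {G' : Type*} [Group G'] (φ : G →* G') {A B : Subgroup G}
    (h : normalIn A B) : normalIn (A.map φ) (B.map φ) := by
  refine ⟨Subgroup.map_mono h.1, ?_⟩
  rintro _ ⟨k, hk, rfl⟩ _ ⟨a, ha, rfl⟩
  exact ⟨k * a * k⁻¹, h.2 k hk a ha, by simp⟩

theorem subnormalIn_map {G' : Type*} [Group G'] (φ : G →* G') {A B : Subgroup G}
    (h : subnormalIn A B) : subnormalIn (A.map φ) (B.map φ) := by
  rw [subnormalIn_iff_reflTransGen] at h ⊢
  exact Relation.ReflTransGen.lift (Subgroup.map φ) (fun a b hab => normalIn_map φ hab) _ _ h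

theorem normalIn_normalizer (H : Subgroup G) : normalIn H (Subgroup.normalizer (H : Set G)) :=
  ⟨Subgroup.le_normalizer, fun k hk h hh => (Subgroup.mem_normalizer_iff.mp hk h).mp hh⟩

/-- strict card monotonicity -/
theorem card_lt_card_of_lt' {Γ : Type*} [Group Γ] [Finite Γ] {A B : Subgroup Γ}
    (hAB : A < B) : Nat.card A < Nat.card B := by
  have h1 : (A : Set Γ) ⊂ (B : Set Γ) := SetLike.coe_ssubset_coe.mpr hAB
  have := Set.ncard_lt_ncard h1 (Set.toFinite _)
  rwa [← Nat.card_coe_set_eq, ← Nat.card_coe_set_eq] at this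

/-- In a finite nilpotent group every subgroup is subnormal in `⊤`. -/
theorem subnormalIn_top_of_isNilpotent {Γ : Type*} [Group Γ] [Finite Γ]
    [Group.IsNilpotent Γ] (H : Subgroup Γ) : subnormalIn H (⊤ : Subgroup Γ) := by
  rw [subnormalIn_iff_reflTransGen]
  have key : ∀ (k : ℕ) (H : Subgroup Γ), Nat.card Γ ≤ Nat.card H + k →
      Relation.ReflTransGen normalIn H (⊤ : Subgroup Γ) := by
    intro k
    induction k with
    | zero =>
      intro H hk
      have : H = ⊤ := by
        by_contra hne
        have := card_lt_card_of_lt' (lt_top_iff_ne_top.mpr hne)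
        have h2 : Nat.card (⊤ : Subgroup Γ) = Nat.card Γ := Nat.card_congr Subgroup.topEquiv.toEquiv
        omega
      exact this ▸ .refl
    | succ k ih =>
      intro H hk
      by_cases hne : H = ⊤
      · exact hne ▸ .refl
      · have hlt : H < Subgroup.normalizer (H : Set Γ) := normalizerCondition_of_isNilpotent H (lt_top_iff_ne_top.mpr hne)
        have hc := card_lt_card_of_lt' hlt
        exact Relation.ReflTransGen.head (normalIn_normalizer H) (ih _ (by omega))
  exact key (Nat.card Γ) H (by omega)


/-- Subgroups of finite `p`-groups are subnormal (ambient version). -/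
theorem subnormalIn_of_le_pgroup [Finite G] {p : ℕ} (hp : p.Prime) {H K : Subgroup G}
    (hK : IsPGroup p K) (hle : H ≤ K) : subnormalIn H K := by
  haveI : Fact p.Prime := ⟨hp⟩
  haveI : Group.IsNilpotent ↥K := hK.isNilpotent
  have h1 : subnormalIn (H.subgroupOf K) (⊤ : Subgroup ↥K) := subnormalIn_top_of_isNilpotent _
  have h2 := subnormalIn_map K.subtype h1
  rwa [Subgroup.subgroupOf_map_subtype, inf_eq_left.mpr hle,
    ← MonoidHom.range_eq_map, Subgroup.range_subtype] at h2

theorem subnormalIn.tail {A B C : Subgroup G} (h : subnormalIn A B) (hn : normalIn B C) :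
    subnormalIn A C := by
  rw [subnormalIn_iff_reflTransGen] at h ⊢
  exact h.tail hn

/-- Normalizer elements of a `p`-subgroup containing `x` are in `subnSet x`. -/
theorem mem_subnSet_of_mem_normalizer [Finite G] {p : ℕ} (hp : p.Prime) {P : Subgroup G}
    (hP : IsPGroup p P) {x s : G} (hx : x ∈ P) (hs : s ∈ Subgroup.normalizer (P : Set G)) : s ∈ subnSet x := by
  set Q := P ⊔ Subgroup.zpowers s with hQ
  have hle : Q ≤ Subgroup.normalizer (P : Set G) := sup_le Subgroup.le_normalizer
    ((Subgroup.zpowers_le).mpr hs)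
  have hQn : normalIn P Q :=
    ⟨le_sup_left, fun k hk h hh => (Subgroup.mem_normalizer_iff.mp (hle hk) h).mp hh⟩
  have h1 : subnormalIn (Subgroup.zpowers x) P :=
    subnormalIn_of_le_pgroup hp hP ((Subgroup.zpowers_le).mpr hx)
  have h2 : subnormalIn (Subgroup.zpowers x) Q := h1.tail hQn
  have h3 := subnormalIn_inf (Subgroup.closure {x, s}) h2
  have e1 : Subgroup.zpowers x ⊓ Subgroup.closure {x, s} = Subgroup.zpowers x :=
    inf_eq_left.mpr ((Subgroup.zpowers_le).mpr (Subgroup.subset_closure (by simp)))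
  have e2 : Q ⊓ Subgroup.closure {x, s} = Subgroup.closure {x, s} := by
    refine inf_eq_right.mpr ((Subgroup.closure_le _).mpr ?_)
    rintro y (rfl | rfl)
    · exact Subgroup.mem_sup_left hx
    · exact Subgroup.mem_sup_right (Subgroup.mem_zpowers _)
  rw [e1, e2] at h3
  exact h3


theorem conj_comp_conj (a b : G) :
    (MulAut.conj a).toMonoidHom.comp (MulAut.conj b).toMonoidHom
      = (MulAut.conj (a * b)).toMonoidHom := by
  ext z
  simp [mul_assoc]

/-- The Frattini-type key step: if `K₁ ⊴ K₂` and `x ∈ K₁` is a `p`-element, then every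
element of `K₂` is an element of `K₁` times an element of `subnSet x`. -/
theorem key_step [Finite G] {p : ℕ} (hp : p.Prime) {K₁ K₂ : Subgroup G}
    (hn : normalIn K₁ K₂) {x : G} (hx1 : x ∈ K₁) {n : ℕ} (hord : orderOf x = p ^ n)
    {g : G} (hg : g ∈ K₂) : ∃ m ∈ K₁, m⁻¹ * g ∈ subnSet x := by
  haveI : Fact p.Prime := ⟨hp⟩
  set x₁ : ↥K₁ := ⟨x, hx1⟩ with hx₁
  have hpx : IsPGroup p (Subgroup.zpowers x₁) :=
    IsPGroup.of_card (by rw [Nat.card_zpowers, hx₁, Subgroup.orderOf_mk, hord])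
  obtain ⟨Q, hQ⟩ := hpx.exists_le_sylow
  obtain ⟨P, hPdef⟩ : ∃ P : Subgroup G, P = (Q : Subgroup ↥K₁).map K₁.subtype := ⟨_, rfl⟩
  have hPle : P ≤ K₁ := by
    rw [hPdef]; rintro _ ⟨q, hq, rfl⟩; exact q.2
  have hxP : x ∈ P := hPdef ▸ ⟨x₁, hQ (Subgroup.mem_zpowers x₁), rfl⟩
  have hPp : IsPGroup p P := hPdef ▸ Q.2.map _
  obtain ⟨P', hP'def⟩ : ∃ P' : Subgroup G, P' = P.map (MulAut.conj g).toMonoidHom := ⟨_, rfl⟩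
  have hP'le : P' ≤ K₁ := by
    rw [hP'def]
    rintro _ ⟨h, hh, rfl⟩
    exact hn.2 g hg h (hPle hh)
  have hP'p : IsPGroup p P' := hP'def ▸ hPp.map _
  obtain ⟨R, hRdef⟩ : ∃ R : Subgroup ↥K₁, R = P'.subgroupOf K₁ := ⟨_, rfl⟩
  have hRp : IsPGroup p R := hRdef ▸ hP'p.comap_of_injective K₁.subtype K₁.subtype_injective
  obtain ⟨Q₂, hQ₂⟩ := hRp.exists_le_sylow
  obtain ⟨m, hm⟩ := MulAction.exists_smul_eq ↥K₁ Q Q₂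
  -- m • Q = Q₂
  -- cardinalities
  have hcardP : Nat.card P = Nat.card (Q : Subgroup ↥K₁) := hPdef ▸
    (Nat.card_congr ((Q : Subgroup ↥K₁).equivMapOfInjective K₁.subtype
      K₁.subtype_injective).toEquiv).symm
  have hcardP' : Nat.card P' = Nat.card P := hP'def ▸
    (Nat.card_congr (P.equivMapOfInjective (MulAut.conj g).toMonoidHom
      (MulAut.conj g).injective).toEquiv).symm
  have hcardR : Nat.card R = Nat.card P' := hRdef ▸
    Nat.card_congr (Subgroup.subgroupOfEquivOfLe hP'le).toEquiv
  have hcardQ₂ : Nat.card (Q₂ : Subgroup ↥K₁) = Nat.card (Q : Subgroup ↥K₁) := by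
    rw [← hm]
    exact (Nat.card_congr (Subgroup.equivSMul (MulAut.conj m) (Q : Subgroup ↥K₁)).toEquiv).symm
  have hReq : R = (Q₂ : Subgroup ↥K₁) :=
    Subgroup.eq_of_le_of_card_ge hQ₂ (by omega)
  -- push back to G
  have hmap : P' = ((Q₂ : Subgroup ↥K₁)).map K₁.subtype := by
    rw [← hReq, hRdef, Subgroup.subgroupOf_map_subtype, inf_eq_left.mpr hP'le]
  have hQ₂subgroup : ((Q₂ : Subgroup ↥K₁)) = (Q : Subgroup ↥K₁).map (MulAut.conj m).toMonoidHom := by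
    rw [← hm]
    rfl
  have hsubtype_conj : K₁.subtype.comp (MulAut.conj m).toMonoidHom
      = (MulAut.conj (m : G)).toMonoidHom.comp K₁.subtype := by
    ext q
    simp [MulAut.conj]
  have hmap2 : P' = P.map (MulAut.conj (m : G)).toMonoidHom := by
    rw [hmap, hQ₂subgroup, Subgroup.map_map, hsubtype_conj, ← Subgroup.map_map, ← hPdef]
  -- so conj by s := m⁻¹ * g fixes P
  obtain ⟨s, hsdef⟩ : ∃ s : G, s = (m : G)⁻¹ * g := ⟨_, rfl⟩
  have hfix : P.map (MulAut.conj s).toMonoidHom = P := by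
    have h1 : P.map (MulAut.conj g).toMonoidHom = P.map (MulAut.conj (m : G)).toMonoidHom :=
      hP'def ▸ hmap2
    calc P.map (MulAut.conj s).toMonoidHom
        = (P.map (MulAut.conj g).toMonoidHom).map (MulAut.conj (m : G)⁻¹).toMonoidHom := by
          rw [Subgroup.map_map, conj_comp_conj, hsdef]
      _ = (P.map (MulAut.conj (m : G)).toMonoidHom).map (MulAut.conj (m : G)⁻¹).toMonoidHom := by
          rw [h1]
      _ = P := by
          rw [Subgroup.map_map, conj_comp_conj, inv_mul_cancel]
          ext z
          simp [MulAut.conj]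
  have hsnorm : s ∈ Subgroup.normalizer (P : Set G) := by
    rw [Subgroup.mem_normalizer_iff]
    intro h
    constructor
    · intro hh
      rw [← hfix]
      exact ⟨h, hh, rfl⟩
    · intro hh
      rw [← hfix] at hh
      obtain ⟨h', hh', he⟩ := hh
      have : h' = h := by
        have := he
        simp only [MulEquiv.coe_toMonoidHom, MulAut.conj_apply] at this
        exact mul_left_cancel (mul_right_cancel this)
      rwa [← this]
  refine ⟨(m : G), m.2, ?_⟩
  rw [← hsdef]
  exact mem_subnSet_of_mem_normalizer hp hPp hxP hsnorm

end Aux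

theorem stmt_17 {G : Type*} [Group G] [Finite G] (p : ℕ) (hp : p.Prime)
    (N : Subgroup G) (hN : subnormalIn N (⊤ : Subgroup G))
    (x : G) (hxN : x ∈ N) (hx : ∃ n : ℕ, orderOf x = p ^ n) :
    ((N : Set G) * (SubG x : Set G)) = Set.univ := by
  obtain ⟨nn, f, h0, hl, hstep⟩ := hN
  obtain ⟨en, hord⟩ := hx
  have main : ∀ i : ℕ, ∀ h : i < nn + 1,
      x ∈ f ⟨i, h⟩ ∧ (f ⟨i, h⟩ : Set G) ⊆ (N : Set G) * (SubG x : Set G) := by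
    intro i
    induction i with
    | zero =>
      intro h
      rw [show (⟨0, h⟩ : Fin (nn + 1)) = 0 from rfl, h0]
      refine ⟨hxN, ?_⟩
      intro y hy
      exact ⟨y, hy, 1, Subgroup.one_mem _, mul_one y⟩
    | succ i ih =>
      intro h
      have hi : i < nn + 1 := by omega
      obtain ⟨hxm, hsub⟩ := ih hi
      have hj : normalIn (f ⟨i, hi⟩) (f ⟨i + 1, h⟩) := hstep ⟨i, by omega⟩
      refine ⟨hj.1 hxm, ?_⟩
      intro y hy
      obtain ⟨m, hm, hs⟩ := key_step hp hj hxm hord hy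
      obtain ⟨nel, hnel, t, ht, hnt⟩ := hsub hm
      refine ⟨nel, hnel, t * (m⁻¹ * y),
        mul_mem ht (Subgroup.subset_closure hs), ?_⟩
      have hnt' : nel * t = m := hnt
      show nel * (t * (m⁻¹ * y)) = y
      rw [← mul_assoc, hnt', ← mul_assoc, mul_inv_cancel, one_mul]
  have htop := (main nn (by omega)).2
  rw [show (⟨nn, by omega⟩ : Fin (nn + 1)) = Fin.last nn from rfl, hl] at htop
  apply Set.eq_univ_of_univ_subset
  intro y _
  exact htop (Subgroup.mem_top y)
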